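/- Let σ_1 ≥ ... ≥ σ_{k−1} > σ_k > 0 be the singular values of H = θᵀKθ (K symmetric positive definite) with σ_k uniquely minimal, and let R' = (1/(2k))·Σ σ_i² − (1/2)·σ_k² > 0. Update θ' = θ − η·K^{−1}·∇_θ R_ill(H(θ)) where ∇_θ R_ill(H) = 2Kθ(σ_k v_k v_kᵀ − (1/k)H)/R'². Then θ'ᵀKθ' has singular values σ'_i = σ_i + (4η/(k R'²))σ_i² + (4η²/(k² R'⁴))σ_i³ for i < k, and σ'_k = σ_k − (4η/R'²)(1−1/k)σ_k² + (4η²/R'⁴)(1−1/k)²σ_k³. -/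

import Mathlib

open Matrix Finset

/-- Let `σ_1 ≥ ⋯ ≥ σ_{k−1} > σ_k > 0` be the singular values of `H = θᵀKθ`
(`K` symmetric positive definite) with `σ_k` uniquely minimal, and
`R' = (1/(2k))Σσ_i² − (1/2)σ_k² > 0`. For `θ' = θ − η·K⁻¹·∇_θ R_ill(H(θ))`,
where `∇_θ R_ill(H) = 2Kθ(σ_k v_k v_kᵀ − (1/k)H)/R'²`, the matrix `θ'ᵀKθ'` has singular
values `σ'_i = σ_i + (4η/(kR'²))σ_i² + (4η²/(k²R'⁴))σ_i³` for `i < k` and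
`σ'_k = σ_k − (4η/R'²)(1−1/k)σ_k² + (4η²/R'⁴)(1−1/k)²σ_k³`. -/
theorem stmt_16 (d k : ℕ) (hk : 2 ≤ k)
    (K θ : Matrix (Fin d) (Fin d) ℝ)
    (hK : K.PosDef)
    (V : Matrix (Fin d) (Fin k) ℝ) (σ : Fin k → ℝ)
    (hV : Vᵀ * V = 1)
    (hSVD : θᵀ * K * θ = V * Matrix.diagonal σ * Vᵀ)
    (hpos : ∀ i, 0 < σ i) (hmono : Antitone σ)
    (hmin : ∀ i : Fin k, i ≠ ⟨k - 1, by omega⟩ → σ ⟨k - 1, by omega⟩ < σ i)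
    (R' : ℝ)
    (hR' : R' = (1 / (2 * (k : ℝ))) * (∑ i, (σ i) ^ 2) - (1 / 2) * (σ ⟨k - 1, by omega⟩) ^ 2)
    (hR'pos : 0 < R')
    (G : Matrix (Fin d) (Fin d) ℝ)
    (hG : G = (R' ^ 2)⁻¹ • ((2 : ℝ) • (K * θ *
      (σ ⟨k - 1, by omega⟩ • Matrix.vecMulVec (fun i => V i ⟨k - 1, by omega⟩)
          (fun j => V j ⟨k - 1, by omega⟩)
        - ((k : ℝ))⁻¹ • (θᵀ * K * θ)))))
    (η : ℝ) (hη : 0 < η) :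
    (θ - η • (K⁻¹ * G))ᵀ * K * (θ - η • (K⁻¹ * G)) =
      V * Matrix.diagonal (fun i =>
        if i = (⟨k - 1, by omega⟩ : Fin k) then
          σ i - (4 * η / R' ^ 2) * (1 - 1 / (k : ℝ)) * (σ i) ^ 2
            + (4 * η ^ 2 / R' ^ 4) * (1 - 1 / (k : ℝ)) ^ 2 * (σ i) ^ 3
        else
          σ i + (4 * η / ((k : ℝ) * R' ^ 2)) * (σ i) ^ 2
            + (4 * η ^ 2 / ((k : ℝ) ^ 2 * R' ^ 4)) * (σ i) ^ 3) * Vᵀ := by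
  have hk0 : (k : ℝ) ≠ 0 := by
    have : 0 < (k:ℝ) := by exact_mod_cast (by omega : 0 < k)
    exact this.ne'
  have hR0 : R' ≠ 0 := hR'pos.ne'
  set e : Fin k := ⟨k - 1, by omega⟩ with he
  set c : ℝ := 2 * η / R' ^ 2 with hc
  set n : Fin k → ℝ := fun i => σ e * (Pi.single e 1 : Fin k → ℝ) i - (k:ℝ)⁻¹ * σ i with hn
  -- smul lemma
  have hsmul : ∀ (s : ℝ) (a : Fin k → ℝ),
      s • (V * diagonal a * Vᵀ) = V * diagonal (s • a) * Vᵀ := by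
    intro s a
    rw [Matrix.diagonal_smul, Matrix.mul_smul, Matrix.smul_mul]
  have dsub : ∀ a b : Fin k → ℝ, diagonal (a - b) = diagonal a - diagonal b := by
    intro a b; ext i j; by_cases h : i = j <;> simp [Matrix.diagonal_apply, h]
  have dadd : ∀ a b : Fin k → ℝ, diagonal (a + b) = diagonal a + diagonal b := by
    intro a b; ext i j; by_cases h : i = j <;> simp [Matrix.diagonal_apply, h]
  have dmul : ∀ a b : Fin k → ℝ, diagonal a * diagonal b = diagonal (a * b) := by
    intro a b; ext i j; by_cases h : i = j <;>
      simp [Matrix.diagonal_apply, Matrix.mul_apply, h, Finset.sum_ite_eq]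
  have hsub : ∀ (a b : Fin k → ℝ),
      V * diagonal a * Vᵀ - V * diagonal b * Vᵀ = V * diagonal (a - b) * Vᵀ := by
    intro a b
    rw [dsub, Matrix.mul_sub, Matrix.sub_mul]
  have hadd : ∀ (a b : Fin k → ℝ),
      V * diagonal a * Vᵀ + V * diagonal b * Vᵀ = V * diagonal (a + b) * Vᵀ := by
    intro a b
    rw [dadd, Matrix.mul_add, Matrix.add_mul]
  have hprod : ∀ (a b : Fin k → ℝ),
      (V * diagonal a * Vᵀ) * (V * diagonal b * Vᵀ) = V * diagonal (a * b) * Vᵀ := by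
    intro a b
    calc (V * diagonal a * Vᵀ) * (V * diagonal b * Vᵀ)
        = V * diagonal a * (Vᵀ * V) * (diagonal b * Vᵀ) := by
          simp only [Matrix.mul_assoc]
      _ = V * (diagonal a * diagonal b) * Vᵀ := by
          rw [hV, Matrix.mul_one]; simp only [Matrix.mul_assoc]
      _ = V * diagonal (a * b) * Vᵀ := by rw [dmul]
  have hvv : Matrix.vecMulVec (fun i => V i e) (fun j => V j e)
      = V * diagonal (Pi.single e 1 : Fin k → ℝ) * Vᵀ := by
    ext i j
    simp [Matrix.vecMulVec_apply, Matrix.mul_apply, Matrix.diagonal_apply,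
      Pi.single_apply, Finset.sum_ite_eq, mul_comm]
  -- W
  set W : Matrix (Fin d) (Fin d) ℝ := V * diagonal n * Vᵀ with hW
  have hNmat : σ e • Matrix.vecMulVec (fun i => V i e) (fun j => V j e)
      - (k:ℝ)⁻¹ • (θᵀ * K * θ) = W := by
    rw [hvv, hSVD, hsmul, hsmul, hsub]
    congr 1
  have hKinv : K⁻¹ * K = 1 :=
    Matrix.nonsing_inv_mul K (isUnit_iff_ne_zero.mpr hK.det_pos.ne')
  have hstep : η • (K⁻¹ * G) = c • (θ * W) := by
    rw [hG, hNmat, smul_smul, Matrix.mul_smul, smul_smul]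
    congr 1
    · rw [hc]; field_simp
    · simp only [← Matrix.mul_assoc]; rw [hKinv, Matrix.one_mul]
  set P : Matrix (Fin d) (Fin d) ℝ := 1 - c • W with hP
  have hθ' : θ - η • (K⁻¹ * G) = θ * P := by
    rw [hstep, hP, Matrix.mul_sub, Matrix.mul_one, Matrix.mul_smul]
  have hPt : Pᵀ = P := by
    rw [hP, Matrix.transpose_sub, Matrix.transpose_one, Matrix.transpose_smul, hW,
      Matrix.transpose_mul, Matrix.transpose_mul, Matrix.diagonal_transpose,
      Matrix.transpose_transpose, Matrix.mul_assoc]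
  rw [hθ', Matrix.transpose_mul, hPt]
  have hassoc : P * θᵀ * K * (θ * P) = P * (θᵀ * K * θ) * P := by
    simp only [Matrix.mul_assoc]
  rw [hassoc, hSVD, hP, hW]
  simp only [Matrix.sub_mul, Matrix.mul_sub, Matrix.one_mul, Matrix.mul_one,
    Matrix.smul_mul, Matrix.mul_smul, hprod, hsmul, hsub, hadd]
  have harg : ∀ a b : Fin k → ℝ, a = b → V * diagonal a * Vᵀ = V * diagonal b * Vᵀ := by
    intro a b h; rw [h]
  apply harg
  funext i
  by_cases hi : i = e
  · subst hi
    simp only [if_pos rfl, hn, hc, Pi.sub_apply, Pi.mul_apply, Pi.smul_apply,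
      Pi.single_eq_same, smul_eq_mul]
    split_ifs with h0
    swap
    · exact absurd trivial h0
    field_simp
    ring
  · simp only [if_neg hi, hn, hc, Pi.sub_apply, Pi.mul_apply, Pi.smul_apply,
      Pi.single_apply, if_neg hi, smul_eq_mul, mul_zero, zero_sub]
    field_simp
    ring
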